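/- Let N and M be natural numbers, b₀, …, b_N and c₀, …, c_M complex numbers. Let y : ℝ → ℂ be N-times continuously differentiable, with y^{(k)} integrable on ℝ for every 0 ≤ k ≤ N and y^{(k)}(x) → 0 as |x| → ∞ for every 0 ≤ k < N. Suppose that for all x ∈ ℝ, Σ_{k=0}^{N} b_k y^{(k)}(x) = (Σ_{n=0}^{M} c_n e^{−inx}) y(x). Define ŷ(γ) = ∫_{−∞}^{∞} y(t) e^{−itγ} dt. Then for all γ ∈ ℝ, Σ_{n=0}^{M} c_n ŷ(γ + n) = (Σ_{k=0}^{N} b_k (iγ)^k) ŷ(γ). -/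

import Mathlib

open scoped BigOperators
open MeasureTheory

lemma key_fi (f : ℝ → ℂ) (γ : ℝ) :
    (∫ t : ℝ, f t * Complex.exp (-Complex.I * t * γ)) =
      FourierTransform.fourier f (γ / (2 * Real.pi)) := by
  rw [Real.fourier_real_eq_integral_exp_smul]
  congr 1
  ext t
  rw [smul_eq_mul, mul_comm]
  congr 2
  have h : (-2 * Real.pi * t * (γ / (2 * Real.pi)) : ℝ) = -t * γ := by
    field_simp
  rw [h]
  push_cast
  ring

lemma exp_mul_int {f : ℝ → ℂ} (hf : Integrable f) (γ : ℝ) :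
    Integrable (fun t : ℝ => f t * Complex.exp (-Complex.I * t * γ)) := by
  have : Integrable (fun t : ℝ => Complex.exp (-Complex.I * t * γ) * f t) := by
    apply hf.bdd_mul (c := 1)
    · exact (Complex.continuous_exp.comp (by continuity)).aestronglyMeasurable
    · refine Filter.Eventually.of_forall (fun t => ?_)
      simp [Complex.norm_exp]
  simpa [mul_comm] using this

lemma aux_deriv (N : ℕ) (y : ℝ → ℂ) (hsmooth : ContDiff ℝ N y)
    (hint : ∀ k : ℕ, k ≤ N → Integrable (iteratedDeriv k y)) (γ : ℝ) :
    ∀ k : ℕ, k ≤ N →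
      (∫ t : ℝ, iteratedDeriv k y t * Complex.exp (-Complex.I * t * γ)) =
        (Complex.I * γ) ^ k * ∫ t : ℝ, y t * Complex.exp (-Complex.I * t * γ) := by
  intro k
  induction k with
  | zero => intro _; simp [iteratedDeriv_zero]
  | succ k ih =>
    intro hk
    have hkN : k ≤ N := Nat.le_of_succ_le hk
    have hdiff : Differentiable ℝ (iteratedDeriv k y) :=
      hsmooth.differentiable_iteratedDeriv k (by exact_mod_cast Nat.lt_of_succ_le hk)
    have hint' : Integrable (deriv (iteratedDeriv k y)) := by
      rw [← iteratedDeriv_succ]; exact hint (k+1) hk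
    rw [key_fi, iteratedDeriv_succ,
      Real.fourier_deriv (hint k hkN) hdiff hint']
    simp only [smul_eq_mul]
    have hπ : (Real.pi : ℝ) ≠ 0 := Real.pi_ne_zero
    have h2 : ((2 : ℂ) * Real.pi * Complex.I * ((γ / (2 * Real.pi) : ℝ) : ℂ)) = Complex.I * γ := by
      push_cast
      have : (Real.pi : ℂ) ≠ 0 := by exact_mod_cast hπ
      field_simp
    rw [h2, ← key_fi, ih hkN, pow_succ]
    ring

theorem stmt4 (N M : ℕ) (b : ℕ → ℂ) (c : ℕ → ℂ) (y : ℝ → ℂ)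
    (hsmooth : ContDiff ℝ N y)
    (hint : ∀ k : ℕ, k ≤ N → Integrable (iteratedDeriv k y))
    (hdecay : ∀ k : ℕ, k < N →
      Filter.Tendsto (iteratedDeriv k y) (Filter.cocompact ℝ) (nhds 0))
    (hode : ∀ x : ℝ,
      ∑ k ∈ Finset.range (N + 1), b k * iteratedDeriv k y x =
        (∑ n ∈ Finset.range (M + 1), c n * Complex.exp (-Complex.I * n * x)) * y x)
    (yhat : ℝ → ℂ)
    (hyhat : ∀ γ : ℝ, yhat γ = ∫ t : ℝ, y t * Complex.exp (-Complex.I * t * γ)) :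
    ∀ γ : ℝ,
      ∑ n ∈ Finset.range (M + 1), c n * yhat (γ + n) =
        (∑ k ∈ Finset.range (N + 1), b k * (Complex.I * γ) ^ k) * yhat γ := by
  intro γ
  have hy : Integrable y := by simpa using hint 0 (Nat.zero_le N)
  -- LHS as a single integral
  have hL : (∫ t : ℝ, (∑ n ∈ Finset.range (M + 1), c n * Complex.exp (-Complex.I * n * t)) *
        y t * Complex.exp (-Complex.I * t * γ)) =
      ∑ n ∈ Finset.range (M + 1), c n * yhat (γ + n) := by
    have hpt : ∀ t : ℝ, (∑ n ∈ Finset.range (M + 1), c n * Complex.exp (-Complex.I * n * t)) *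
        y t * Complex.exp (-Complex.I * t * γ) =
        ∑ n ∈ Finset.range (M + 1),
          c n * (y t * Complex.exp (-Complex.I * t * ((γ : ℝ) + n))) := by
      intro t
      rw [Finset.sum_mul, Finset.sum_mul]
      refine Finset.sum_congr rfl fun n _ => ?_
      rw [mul_assoc, mul_assoc]
      congr 1
      rw [mul_comm (Complex.exp _), mul_assoc, ← Complex.exp_add]
      congr 1
      push_cast
      ring
    simp_rw [hpt]
    have hInt : ∀ n ∈ Finset.range (M + 1), Integrable
        (fun t : ℝ => c n * (y t * Complex.exp (-Complex.I * t * ((γ : ℝ) + n)))) := by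
      intro n _
      have := (exp_mul_int hy (γ + n)).const_mul (c n)
      simpa using this
    rw [integral_finset_sum _ hInt]
    refine Finset.sum_congr rfl fun n _ => ?_
    rw [hyhat, MeasureTheory.integral_const_mul]
    norm_cast
  -- RHS as a single integral
  have hR : (∫ t : ℝ, (∑ k ∈ Finset.range (N + 1), b k * iteratedDeriv k y t) *
        Complex.exp (-Complex.I * t * γ)) =
      (∑ k ∈ Finset.range (N + 1), b k * (Complex.I * γ) ^ k) * yhat γ := by
    have hpt : ∀ t : ℝ, (∑ k ∈ Finset.range (N + 1), b k * iteratedDeriv k y t) *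
        Complex.exp (-Complex.I * t * γ) =
        ∑ k ∈ Finset.range (N + 1),
          b k * (iteratedDeriv k y t * Complex.exp (-Complex.I * t * γ)) := by
      intro t
      rw [Finset.sum_mul]
      exact Finset.sum_congr rfl fun k _ => by ring
    simp_rw [hpt]
    have hInt : ∀ k ∈ Finset.range (N + 1), Integrable
        (fun t : ℝ => b k * (iteratedDeriv k y t * Complex.exp (-Complex.I * t * γ))) := by
      intro k hk
      exact (exp_mul_int (hint k (Nat.lt_succ_iff.mp (Finset.mem_range.mp hk))) γ).const_mul (b k)
    rw [integral_finset_sum _ hInt]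
    rw [Finset.sum_mul]
    refine Finset.sum_congr rfl fun k hk => ?_
    rw [MeasureTheory.integral_const_mul, aux_deriv N y hsmooth hint γ k
      (Nat.lt_succ_iff.mp (Finset.mem_range.mp hk)), hyhat]
    ring
  rw [← hL, ← hR]
  congr 1
  ext t
  rw [hode t]
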